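/- Let N and P be n×n complex matrices with P invertible and N · P = P · conj(N). If N has an eigenvalue ω with Im(ω) ≠ 0, then N has an eigenvalue with strictly positive imaginary part; moreover any eigenvector ψ of such a non-real eigenvalue fails to be an eigenvector of the PT operator (there is no λ ∈ ℂ with P·conj(ψ) = λ·ψ). -/

import Mathlib

open Matrix

lemma map_conj_mulVec_star {n : ℕ} (N : Matrix (Fin n) (Fin n) ℂ) (ψ : Fin n → ℂ) :
    (N.map (starRingEnd ℂ)).mulVec (star ψ) = star (N.mulVec ψ) := by
  funext i
  simp [Matrix.mulVec, dotProduct, Pi.star_apply, map_sum]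

/-- Property (iii) of PT-symmetric Hamiltonians: if a PT-symmetric `N` has an eigenvalue
with nonzero imaginary part, then it has an eigenvalue with strictly positive imaginary
part (an unstable mode), and every eigenvector of a non-real eigenvalue fails to be an
eigenvector of the PT operator `ψ ↦ P ⬝ conj ψ` (spontaneously broken PT symmetry). -/
theorem stmt_10 {n : ℕ} (N P : Matrix (Fin n) (Fin n) ℂ)
    (hP : IsUnit P)
    (hPT : N * P = P * N.map (starRingEnd ℂ)) :
    ∀ (ω : ℂ) (ψ : Fin n → ℂ), ψ ≠ 0 → N.mulVec ψ = ω • ψ → ω.im ≠ 0 →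
      (∃ (ω' : ℂ) (ψ' : Fin n → ℂ), ψ' ≠ 0 ∧ N.mulVec ψ' = ω' • ψ' ∧ 0 < ω'.im) ∧
      ¬∃ lam : ℂ, P.mulVec (star ψ) = lam • ψ := by
  intro ω ψ hψ hev him
  -- key: N (P conj ψ) = conj ω • (P conj ψ)
  have hkey : N.mulVec (P.mulVec (star ψ)) =
      (starRingEnd ℂ ω) • P.mulVec (star ψ) := by
    rw [Matrix.mulVec_mulVec, hPT, ← Matrix.mulVec_mulVec,
      map_conj_mulVec_star, hev]
    rw [← Matrix.mulVec_smul]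
    funext i
    simp [Pi.smul_apply, Pi.star_apply, mul_comm]
  have hstarψ : star ψ ≠ 0 := by
    intro h
    apply hψ
    have := congrArg star h
    simpa using this
  have hPψ : P.mulVec (star ψ) ≠ 0 := by
    intro h
    obtain ⟨u, rfl⟩ := hP
    have := congrArg ((u⁻¹ : (Matrix (Fin n) (Fin n) ℂ)ˣ) : Matrix (Fin n) (Fin n) ℂ).mulVec h
    rw [Matrix.mulVec_mulVec] at this
    simp [Matrix.mulVec_zero] at this
    exact hψ this
  constructor
  · rcases lt_or_gt_of_ne him with hlt | hgt
    · exact ⟨starRingEnd ℂ ω, P.mulVec (star ψ), hPψ, hkey, by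
        simpa using neg_pos.mpr hlt⟩
    · exact ⟨ω, ψ, hψ, hev, hgt⟩
  · rintro ⟨lam, hlam⟩
    have h1 : N.mulVec (lam • ψ) = (lam * ω) • ψ := by
      rw [Matrix.mulVec_smul, hev, smul_smul]
    have h2 : N.mulVec (lam • ψ) = (starRingEnd ℂ ω * lam) • ψ := by
      rw [← hlam, hkey, hlam, smul_smul]
    have h3 : (lam * ω) • ψ = (starRingEnd ℂ ω * lam) • ψ := h1 ▸ h2
    have h4 : lam * ω = starRingEnd ℂ ω * lam := by
      by_contra hne
      have := sub_smul (lam * ω) (starRingEnd ℂ ω * lam) ψ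
      rw [h3, sub_self] at this
      exact hψ ((smul_eq_zero.mp this).resolve_left (sub_ne_zero.mpr hne))
    have hlam0 : lam = 0 := by
      by_contra hl
      apply him
      have : ω = starRingEnd ℂ ω := by
        field_simp at h4
        exact h4
      have := congrArg Complex.im this
      simp at this
      linarith
    rw [hlam0, zero_smul] at hlam
    exact hPψ hlam
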